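/- For every positive integer N and m ∈ {1,2}, the generating functions G_{m,N}(a,b,q) satisfy q^{3N}(1+bq) G_{m,3(N-1)} = G_{m,3N+1} - G_{m,3(N-1)+1} - a q^{3N-1}(1 + b q^{3N+1}) G_{m,3(N-2)+1}. -/

import Mathlib

namespace CapparelliG

/-- `G m Nb` is the Alladi–Andrews–Gordon three-variable generating function
`G_{m,Nb}(a,b,q)` (with `a = X 0`, `b = X 1`, `q = X 2`), allowing an integer bound
`Nb` on the largest part.  For `Nb ≥ 0` the coefficient of `aⁱ bʲ qⁿ` is the number of
partitions of `n` with no part equal to `m`, largest part `≤ Nb`, consecutive-part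
differences `≥ 4` unless the parts are consecutive multiples of 3 or sum to a multiple
of 6 (difference at least 2), with `i` parts `≡ 2 (mod 3)` and `j` parts `≡ 1 (mod 3)`.
For negative indices we use the stipulated initial values
`G_{m,-1} = 1`, `G_{m,-2} = δ_{1,m}` (and `0` below `-2`). -/
noncomputable def G (m : ℕ) (Nb : ℤ) : MvPowerSeries (Fin 3) ℤ :=
  if 0 ≤ Nb then
    (fun d =>
      (Nat.card {l : List ℕ // (∀ x ∈ l, 0 < x ∧ x ≠ m ∧ (x : ℤ) ≤ Nb) ∧
          l.Chain' (fun x y => y + 2 ≤ x ∧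
            (y + 4 ≤ x ∨ (3 ∣ y ∧ x = y + 3) ∨ 6 ∣ (x + y))) ∧
          (l.filter (fun x => x % 3 = 2)).length = d 0 ∧
          (l.filter (fun x => x % 3 = 1)).length = d 1 ∧
          l.sum = d 2} : ℤ))
  else if Nb = -1 then 1
  else if Nb = -2 ∧ m = 1 then 1
  else 0

open MvPowerSeries

/-- The gap condition between consecutive parts. -/
def stp (x y : ℕ) : Prop :=
  y + 2 ≤ x ∧ (y + 4 ≤ x ∨ (3 ∣ y ∧ x = y + 3) ∨ 6 ∣ (x + y))

instance : IsTrans ℕ stp := ⟨by intro a b c h1 h2; unfold stp at *; omega⟩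

/-- Generalized admissibility predicate, with an abstract allowed-part predicate `A`. -/
def okA (m : ℕ) (A : ℕ → Prop) (d : Fin 3 →₀ ℕ) (l : List ℕ) : Prop :=
  (∀ x ∈ l, 0 < x ∧ x ≠ m ∧ A x) ∧ l.Chain' stp ∧
  (l.filter (fun x => x % 3 = 2)).length = d 0 ∧
  (l.filter (fun x => x % 3 = 1)).length = d 1 ∧
  l.sum = d 2

instance okA_finite (m : ℕ) (A : ℕ → Prop) (d : Fin 3 →₀ ℕ) :
    Finite {l : List ℕ // okA m A d l} := by
  apply Finite.of_injective
    (fun l => (⟨l.1, fun hi => (l.2.1 _ hi).1, l.2.2.2.2.2⟩ : Composition (d 2)))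
  intro a b h
  exact Subtype.ext (congrArg Composition.blocks h)

/-- The generating series attached to `okA`. -/
noncomputable def HA (m : ℕ) (A : ℕ → Prop) : MvPowerSeries (Fin 3) ℤ :=
  fun d => (Nat.card {l : List ℕ // okA m A d l} : ℤ)

lemma coeff_HA (m : ℕ) (A : ℕ → Prop) (d : Fin 3 →₀ ℕ) :
    coeff d (HA m A) = (Nat.card {l : List ℕ // okA m A d l} : ℤ) := rfl

lemma HA_congr (m : ℕ) (A B : ℕ → Prop) (h : ∀ x, 0 < x → x ≠ m → (A x ↔ B x)) :
    HA m A = HA m B := by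
  ext d
  rw [coeff_HA, coeff_HA]
  congr 1
  apply Nat.card_congr
  apply Equiv.subtypeEquivRight
  intro l
  constructor <;> rintro ⟨h1, h2⟩ <;>
    exact ⟨fun x hx => ⟨(h1 x hx).1, (h1 x hx).2.1, by
      first
        | exact (h x (h1 x hx).1 (h1 x hx).2.1).mp (h1 x hx).2.2
        | exact (h x (h1 x hx).1 (h1 x hx).2.1).mpr (h1 x hx).2.2⟩, h2⟩

lemma HA_one (m : ℕ) (A : ℕ → Prop) (h : ∀ x, 0 < x → ¬ A x) : HA m A = 1 := by
  ext d
  classical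
  rw [coeff_HA, MvPowerSeries.coeff_one]
  have hforced : ∀ l : List ℕ, okA m A d l → l = [] := by
    intro l hl
    cases l with
    | nil => rfl
    | cons a t =>
      have := hl.1 a (List.mem_cons_self)
      exact absurd this.2.2 (h a this.1)
  by_cases hd : d = 0
  · subst hd
    rw [if_pos rfl]
    have hne : Nonempty {l : List ℕ // okA m A 0 l} :=
      ⟨⟨[], ⟨by simp, List.isChain_nil, by simp, by simp, by simp⟩⟩⟩
    have hsub : Subsingleton {l : List ℕ // okA m A 0 l} :=
      ⟨fun a b => Subtype.ext ((hforced _ a.2).trans (hforced _ b.2).symm)⟩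
    rw [Nat.card_unique]
    rfl
  · rw [if_neg hd]
    have : IsEmpty {l : List ℕ // okA m A d l} := by
      constructor
      rintro ⟨l, hl⟩
      have hnil := hforced l hl
      subst hnil
      apply hd
      obtain ⟨-, -, h3, h4, h5⟩ := hl
      ext i
      fin_cases i
      · simpa using h3.symm
      · simpa using h4.symm
      · simpa using h5.symm
    rw [Nat.card_of_isEmpty]
    rfl

lemma head_eq_of_mem {K : ℕ} {l : List ℕ} (hc : l.Chain' stp) (hmax : ∀ x ∈ l, x ≤ K)
    (hmem : K ∈ l) : l = K :: l.tail := by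
  cases l with
  | nil => simp at hmem
  | cons a t =>
    rcases List.mem_cons.1 hmem with h | h
    · rw [h]; rfl
    · exfalso
      have hp := List.isChain_iff_pairwise.mp hc
      have h1 := (List.pairwise_cons.mp hp).1 K h
      have h2 := hmax a (List.mem_cons_self)
      unfold stp at h1; omega

variable {m K : ℕ} {A : ℕ → Prop} {d e : Fin 3 →₀ ℕ}

lemma peel_fwd (he0 : e 0 = if K % 3 = 2 then 1 else 0)
    (he1 : e 1 = if K % 3 = 1 then 1 else 0) (he2 : e 2 = K)
    (hmax : ∀ x, A x → x ≤ K) {l : List ℕ}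
    (h : okA m A d l) (hmem : K ∈ l) :
    l = K :: l.tail ∧ okA m (fun x => A x ∧ stp K x) (d - e) l.tail := by
  obtain ⟨h1, h2, h3, h4, h5⟩ := h
  have hhd : l = K :: l.tail := head_eq_of_mem h2 (fun x hx => hmax x (h1 x hx).2.2) hmem
  refine ⟨hhd, ?_, ?_, ?_, ?_, ?_⟩
  · intro x hx
    have hx' : x ∈ l := by rw [hhd]; exact List.mem_cons_of_mem _ hx
    have hs : stp K x := by
      have hp := List.isChain_iff_pairwise.mp (hhd ▸ h2)
      exact (List.pairwise_cons.mp hp).1 x hx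
    exact ⟨(h1 x hx').1, (h1 x hx').2.1, (h1 x hx').2.2, hs⟩
  · have := hhd ▸ h2
    exact this.tail
  · rw [hhd, List.filter_cons] at h3
    rw [Finsupp.tsub_apply, he0]
    have hr : K % 3 = 0 ∨ K % 3 = 1 ∨ K % 3 = 2 := by omega
    rcases hr with hr | hr | hr <;> simp [hr] at h3 ⊢ <;> omega
  · rw [hhd, List.filter_cons] at h4
    rw [Finsupp.tsub_apply, he1]
    have hr : K % 3 = 0 ∨ K % 3 = 1 ∨ K % 3 = 2 := by omega
    rcases hr with hr | hr | hr <;> simp [hr] at h4 ⊢ <;> omega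
  · rw [hhd, List.sum_cons] at h5
    rw [Finsupp.tsub_apply, he2]
    omega

lemma peel_bwd (hK : 0 < K) (hKm : K ≠ m) (hAK : A K)
    (he0 : e 0 = if K % 3 = 2 then 1 else 0)
    (he1 : e 1 = if K % 3 = 1 then 1 else 0) (he2 : e 2 = K)
    (hed : e ≤ d) {t : List ℕ}
    (h : okA m (fun x => A x ∧ stp K x) (d - e) t) :
    okA m A d (K :: t) := by
  obtain ⟨h1, h2, h3, h4, h5⟩ := h
  have hed0 := hed 0
  have hed1 := hed 1
  have hed2 := hed 2
  refine ⟨?_, ?_, ?_, ?_, ?_⟩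
  · intro x hx
    rcases List.mem_cons.1 hx with rfl | hx'
    · exact ⟨hK, hKm, hAK⟩
    · exact ⟨(h1 x hx').1, (h1 x hx').2.1, (h1 x hx').2.2.1⟩
  · refine List.isChain_cons.2 ⟨fun y hy => ?_, h2⟩
    exact (h1 y (List.mem_of_mem_head? hy)).2.2.2
  · rw [Finsupp.tsub_apply, he0] at h3
    rw [List.filter_cons]
    have hr : K % 3 = 0 ∨ K % 3 = 1 ∨ K % 3 = 2 := by omega
    rcases hr with hr | hr | hr <;> simp [hr] at h3 ⊢ <;> rw [he0] at hed0 <;>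
      simp [hr] at hed0 <;> omega
  · rw [Finsupp.tsub_apply, he1] at h4
    rw [List.filter_cons]
    have hr : K % 3 = 0 ∨ K % 3 = 1 ∨ K % 3 = 2 := by omega
    rcases hr with hr | hr | hr <;> simp [hr] at h4 ⊢ <;> rw [he1] at hed1 <;>
      simp [hr] at hed1 <;> omega
  · rw [Finsupp.tsub_apply, he2] at h5
    rw [he2] at hed2
    rw [List.sum_cons]
    omega

variable {m K : ℕ} {A : ℕ → Prop} {d e : Fin 3 →₀ ℕ}

lemma fin_sub (Q : List ℕ → Prop) : Finite {l : List ℕ // okA m A d l ∧ Q l} :=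
  Finite.of_injective (fun x => (⟨x.1, x.2.1⟩ : {l : List ℕ // okA m A d l}))
    (fun a b h => by simpa [Subtype.ext_iff] using h)

lemma card_peel (hK : 0 < K) (hKm : K ≠ m) (hAK : A K)
    (hmax : ∀ x, A x → x ≤ K)
    (he0 : e 0 = if K % 3 = 2 then 1 else 0)
    (he1 : e 1 = if K % 3 = 1 then 1 else 0) (he2 : e 2 = K)
    (d : Fin 3 →₀ ℕ) :
    Nat.card {l : List ℕ // okA m A d l} =
      Nat.card {l : List ℕ // okA m (fun x => A x ∧ x ≠ K) d l} +
        if e ≤ d then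
          Nat.card {l : List ℕ // okA m (fun x => A x ∧ stp K x) (d - e) l}
        else 0 := by
  classical
  haveI := fin_sub (m := m) (A := A) (d := d) (fun l => K ∉ l)
  haveI := fin_sub (m := m) (A := A) (d := d) (fun l => K ∈ l)
  have hsplit : Nat.card {l : List ℕ // okA m A d l} =
      Nat.card {l : List ℕ // okA m A d l ∧ K ∉ l} +
      Nat.card {l : List ℕ // okA m A d l ∧ K ∈ l} := by
    rw [← Nat.card_sum]
    apply Nat.card_congr
    refine ⟨fun x => if h : K ∈ x.1 then .inr ⟨x.1, x.2, h⟩ else .inl ⟨x.1, x.2, h⟩,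
      Sum.elim (fun x => ⟨x.1, x.2.1⟩) (fun x => ⟨x.1, x.2.1⟩), ?_, ?_⟩
    · intro x
      by_cases h : K ∈ (x : List ℕ) <;> simp [h]
    · rintro (x | x)
      · simp only [Sum.elim_inl]
        exact dif_neg x.2.2
      · simp only [Sum.elim_inr]
        exact dif_pos x.2.2
  rw [hsplit]
  congr 1
  · apply Nat.card_congr
    apply Equiv.subtypeEquivRight
    intro l
    unfold okA
    constructor
    · rintro ⟨⟨h1, h2⟩, hK'⟩
      exact ⟨fun x hx => ⟨(h1 x hx).1, (h1 x hx).2.1, (h1 x hx).2.2,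
        fun hxK => hK' (hxK ▸ hx)⟩, h2⟩
    · rintro ⟨h1, h2⟩
      refine ⟨⟨fun x hx => ⟨(h1 x hx).1, (h1 x hx).2.1, (h1 x hx).2.2.1⟩, h2⟩, fun hK' => ?_⟩
      exact (h1 K hK').2.2.2 rfl
  · split_ifs with hed
    · apply Nat.card_congr
      refine ⟨fun x => ⟨x.1.tail, (peel_fwd he0 he1 he2 hmax x.2.1 x.2.2).2⟩,
        fun t => ⟨K :: t.1, peel_bwd hK hKm hAK he0 he1 he2 hed t.2,
          List.mem_cons_self⟩, ?_, ?_⟩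
      · intro x
        exact Subtype.ext ((peel_fwd he0 he1 he2 hmax x.2.1 x.2.2).1).symm
      · intro t; rfl
    · haveI : IsEmpty {l : List ℕ // okA m A d l ∧ K ∈ l} := by
        constructor
        rintro ⟨l, hl, hmem⟩
        apply hed
        intro i
        obtain ⟨h1, h2, h3, h4, h5⟩ := hl
        fin_cases i
        · show e 0 ≤ d 0
          rw [he0]
          split_ifs with hr
          · have : K ∈ l.filter (fun x => x % 3 = 2) :=
              List.mem_filter.2 ⟨hmem, by simp [hr]⟩
            have := List.length_pos_iff.2 (List.ne_nil_of_mem this)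
            omega
          · exact Nat.zero_le _
        · show e 1 ≤ d 1
          rw [he1]
          split_ifs with hr
          · have : K ∈ l.filter (fun x => x % 3 = 1) :=
              List.mem_filter.2 ⟨hmem, by simp [hr]⟩
            have := List.length_pos_iff.2 (List.ne_nil_of_mem this)
            omega
          · exact Nat.zero_le _
        · show e 2 ≤ d 2
          rw [he2]
          calc K ≤ l.sum := List.le_sum_of_mem hmem
          _ = d 2 := h5
      exact Nat.card_of_isEmpty


lemma HA_peel (m K : ℕ) (A B C : ℕ → Prop) (e : Fin 3 →₀ ℕ)
    (hK : 0 < K) (hKm : K ≠ m) (hAK : A K) (hmax : ∀ x, A x → x ≤ K)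
    (hB : ∀ x, 0 < x → x ≠ m → (B x ↔ (A x ∧ x ≠ K)))
    (hC : ∀ x, 0 < x → x ≠ m → (C x ↔ (A x ∧ stp K x)))
    (he0 : e 0 = if K % 3 = 2 then 1 else 0)
    (he1 : e 1 = if K % 3 = 1 then 1 else 0) (he2 : e 2 = K) :
    HA m A = HA m B + monomial e 1 * HA m C := by
  rw [HA_congr m B _ hB, HA_congr m C _ hC]
  ext d
  rw [map_add, coeff_monomial_mul, coeff_HA, coeff_HA,
    card_peel hK hKm hAK hmax he0 he1 he2 d]
  push_cast
  split_ifs <;> simp [coeff_HA]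

lemma X_mul_X_pow (s : Fin 3) (k : ℕ) :
    (X s * X 2 ^ k : MvPowerSeries (Fin 3) ℤ) =
      monomial (Finsupp.single s 1 + Finsupp.single 2 k) 1 := by
  rw [X_pow_eq, X, monomial_mul_monomial, one_mul]

lemma recA (m N : ℕ) (hm : m = 1 ∨ m = 2) (hN : 1 ≤ N) :
    HA m (fun x => x ≤ 3*N) =
      HA m (fun x => x ≤ 3*N-1) + X 2 ^ (3*N) * HA m (fun x => x ≤ 3*N-3) := by
  rw [X_pow_eq]
  exact HA_peel m (3*N) _ _ _ (Finsupp.single 2 (3*N)) (by omega) (by omega) (by omega)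
    (fun x hx => hx)
    (by intro x hx hxm; omega)
    (by intro x hx hxm; unfold stp; omega)
    (by simp [Finsupp.single_apply, Nat.mul_mod_right])
    (by simp [Finsupp.single_apply, Nat.mul_mod_right])
    (by simp)

lemma recB_ne (m N : ℕ) (hm : m = 1 ∨ m = 2) (hN : 1 ≤ N) (hg : 3*N-1 ≠ m) :
    HA m (fun x => x ≤ 3*N+1) =
      HA m (fun x => x ≤ 3*N) +
        (X 1 * X 2 ^ (3*N+1)) *
          (HA m (fun x => x ≤ 3*N-3) +
            (X 0 * X 2 ^ (3*N-1)) * HA m (fun x => x ≤ 3*N-5)) := by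
  have h1 := HA_peel m (3*N+1) (fun x => x ≤ 3*N+1) (fun x => x ≤ 3*N)
    (fun x => x ≤ 3*N+1 ∧ stp (3*N+1) x)
    (Finsupp.single 1 1 + Finsupp.single 2 (3*N+1))
    (by omega) (by omega) (by omega)
    (fun x hx => hx)
    (by intro x hx hxm; omega)
    (fun x _ _ => Iff.rfl)
    (by have : (3*N+1) % 3 = 1 := by omega
        simp [Finsupp.add_apply, Finsupp.single_apply, this])
    (by have : (3*N+1) % 3 = 1 := by omega
        simp [Finsupp.add_apply, Finsupp.single_apply, this])
    (by simp [Finsupp.add_apply, Finsupp.single_apply])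
  have h2 := HA_peel m (3*N-1) (fun x => x ≤ 3*N+1 ∧ stp (3*N+1) x)
    (fun x => x ≤ 3*N-3) (fun x => x ≤ 3*N-5)
    (Finsupp.single 0 1 + Finsupp.single 2 (3*N-1))
    (by omega) hg
    (by refine ⟨by omega, ?_⟩; unfold stp; omega)
    (by intro x hx; unfold stp at hx; omega)
    (by intro x hx hxm; unfold stp; omega)
    (by intro x hx hxm; unfold stp; omega)
    (by have : (3*N-1) % 3 = 2 := by omega
        simp [Finsupp.add_apply, Finsupp.single_apply, this])
    (by have : (3*N-1) % 3 = 2 := by omega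
        simp [Finsupp.add_apply, Finsupp.single_apply, this])
    (by simp [Finsupp.add_apply, Finsupp.single_apply])
  rw [h1, h2, X_mul_X_pow, X_mul_X_pow]

lemma recB_eq (m N : ℕ) (hm : m = 1 ∨ m = 2) (hN : 1 ≤ N) (hg : 3*N-1 = m) :
    HA m (fun x => x ≤ 3*N+1) =
      HA m (fun x => x ≤ 3*N) +
        (X 1 * X 2 ^ (3*N+1)) * HA m (fun x => x ≤ 3*N-3) := by
  have h1 := HA_peel m (3*N+1) (fun x => x ≤ 3*N+1) (fun x => x ≤ 3*N)
    (fun x => x ≤ 3*N+1 ∧ stp (3*N+1) x)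
    (Finsupp.single 1 1 + Finsupp.single 2 (3*N+1))
    (by omega) (by omega) (by omega)
    (fun x hx => hx)
    (by intro x hx hxm; omega)
    (fun x _ _ => Iff.rfl)
    (by have : (3*N+1) % 3 = 1 := by omega
        simp [Finsupp.add_apply, Finsupp.single_apply, this])
    (by have : (3*N+1) % 3 = 1 := by omega
        simp [Finsupp.add_apply, Finsupp.single_apply, this])
    (by simp [Finsupp.add_apply, Finsupp.single_apply])
  have h2 : HA m (fun x => x ≤ 3*N+1 ∧ stp (3*N+1) x) = HA m (fun x => x ≤ 3*N-3) := by
    apply HA_congr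
    intro x hx hxm
    unfold stp
    omega
  rw [h1, h2, X_mul_X_pow]

lemma recC_ne (m N : ℕ) (hm : m = 1 ∨ m = 2) (hN : 1 ≤ N) (hg : 3*N-1 ≠ m) :
    HA m (fun x => x ≤ 3*N-1) =
      HA m (fun x => x ≤ 3*N-2) + (X 0 * X 2 ^ (3*N-1)) * HA m (fun x => x ≤ 3*N-5) := by
  rw [X_mul_X_pow]
  exact HA_peel m (3*N-1) _ _ _ (Finsupp.single 0 1 + Finsupp.single 2 (3*N-1))
    (by omega) hg (by omega)
    (fun x hx => hx)
    (by intro x hx hxm; omega)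
    (by intro x hx hxm; unfold stp; omega)
    (by have : (3*N-1) % 3 = 2 := by omega
        simp [Finsupp.add_apply, Finsupp.single_apply, this])
    (by have : (3*N-1) % 3 = 2 := by omega
        simp [Finsupp.add_apply, Finsupp.single_apply, this])
    (by simp [Finsupp.add_apply, Finsupp.single_apply])

lemma recC_eq (m N : ℕ) (hm : m = 1 ∨ m = 2) (hN : 1 ≤ N) (hg : 3*N-1 = m) :
    HA m (fun x => x ≤ 3*N-1) = HA m (fun x => x ≤ 3*N-2) := by
  apply HA_congr
  intro x hx hxm
  omega

lemma G_coe (m K : ℕ) : G m (K : ℤ) = HA m (fun x => x ≤ K) := by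
  unfold G
  refine (if_pos (Int.natCast_nonneg K)).trans ?_
  funext d
  show ((Nat.card _ : ℤ)) = ((Nat.card _ : ℤ))
  congr 1
  apply Nat.card_congr
  apply Equiv.subtypeEquivRight
  intro l
  unfold okA
  constructor <;> rintro ⟨h1, h2⟩ <;>
    refine ⟨fun x hx => ⟨(h1 x hx).1, (h1 x hx).2.1, ?_⟩, h2⟩
  · exact_mod_cast (h1 x hx).2.2
  · exact_mod_cast (h1 x hx).2.2

lemma G_neg2 (m : ℕ) : G m (-2) = if m = 1 then 1 else 0 := by
  unfold G
  norm_num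
  exact if_neg id

/-- Berkovich–Uncu, Section 5, the combined relation: for `m ∈ {1,2}` and every positive
integer `N`,
`q^{3N}(1+bq) G_{m,3(N-1)} = G_{m,3N+1} - G_{m,3(N-1)+1}
  - a q^{3N-1}(1 + b q^{3N+1}) G_{m,3(N-2)+1}`. -/
theorem G_combined_relation (m : ℕ) (hm : m = 1 ∨ m = 2) (N : ℕ) (hN : 1 ≤ N) :
    (MvPowerSeries.X 2 : MvPowerSeries (Fin 3) ℤ) ^ (3 * N) *
        (1 + MvPowerSeries.X 1 * MvPowerSeries.X 2) * G m (3 * ((N : ℤ) - 1)) =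
      G m (3 * N + 1) - G m (3 * ((N : ℤ) - 1) + 1) -
        (MvPowerSeries.X 0 : MvPowerSeries (Fin 3) ℤ) * MvPowerSeries.X 2 ^ (3 * N - 1) *
          (1 + MvPowerSeries.X 1 * MvPowerSeries.X 2 ^ (3 * N + 1)) *
          G m (3 * ((N : ℤ) - 2) + 1) := by
  have e1 : (3 * ((N : ℤ) - 1)) = ((3*N-3 : ℕ) : ℤ) := by omega
  have e2 : (3 * (N : ℤ) + 1) = ((3*N+1 : ℕ) : ℤ) := by omega
  have e3 : (3 * ((N : ℤ) - 1) + 1) = ((3*N-2 : ℕ) : ℤ) := by omega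
  rw [e2, e3, e1, G_coe, G_coe, G_coe]
  have hA := recA m N hm hN
  by_cases hx : m = 2 ∧ N = 1
  · obtain ⟨hm2, hN1⟩ := hx
    subst hm2 hN1
    have hB := recB_eq 2 1 (Or.inr rfl) le_rfl (by norm_num)
    have hC := recC_eq 2 1 (Or.inr rfl) le_rfl (by norm_num)
    rw [show (3 * (((1:ℕ) : ℤ) - 2) + 1) = -2 by norm_num, G_neg2, if_neg (by norm_num : ¬(2:ℕ) = 1), mul_zero, sub_zero]
    linear_combination -hB - hA - hC
  · have hg : 3*N-1 ≠ m := by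
      rcases hm with h | h <;> omega
    have hB := recB_ne m N hm hN hg
    have hC := recC_ne m N hm hN hg
    have hG4 : G m (3 * ((N : ℤ) - 2) + 1) = HA m (fun x => x ≤ 3*N-5) := by
      rcases Nat.lt_or_ge N 2 with h | h
      · have hN1 : N = 1 := by omega
        have hm1 : m = 1 := by
          rcases hm with h' | h'
          · exact h'
          · exact absurd ⟨h', hN1⟩ hx
        subst hN1 hm1
        rw [show (3 * (((1:ℕ) : ℤ) - 2) + 1) = -2 by norm_num, G_neg2, if_pos rfl]
        rw [HA_one 1 _ (by intro x h1 h2; omega)]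
      · rw [show (3 * ((N : ℤ) - 2) + 1) = ((3*N-5 : ℕ) : ℤ) by omega, G_coe]
    rw [hG4]
    linear_combination -hB - hA - hC

end CapparelliG
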